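/- Let f : ℝ → ℝ be a non-constant function satisfying: (1) for all x, y ∈ ℝ, z ∈ [0,1], and γ ∈ [0,1), f(γ(z x + (1−z) y)) = f(γ(z f(x) + (1−z) f(y))); and (2) for all C ∈ ℝ and γ ∈ [0,1), f(C) = f(C + γ f(0)). Then f is the identity function: f(x) = x for all x ∈ ℝ. -/

import Mathlib

/-- Auxiliary: a function invariant under all shifts in `[0, δ]` is constant. -/
lemma aux_const_of_shift (f : ℝ → ℝ) (δ : ℝ) (hδ : 0 < δ)
    (h : ∀ x t : ℝ, 0 ≤ t → t ≤ δ → f x = f (x + t)) :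
    ∀ a b : ℝ, f a = f b := by
  have hn : ∀ n : ℕ, ∀ x t : ℝ, 0 ≤ t → t ≤ n * δ → f x = f (x + t) := by
    intro n
    induction n with
    | zero =>
      intro x t ht0 ht1
      have : t = 0 := le_antisymm (by simpa using ht1) ht0
      rw [this, add_zero]
    | succ n ih =>
      intro x t ht0 ht1
      by_cases hc : t ≤ δ
      · exact h x t ht0 hc
      · have e1 : f x = f (x + δ) := h x δ hδ.le le_rfl
        have e2 : f (x + δ) = f (x + δ + (t - δ)) := by
          apply ih (x + δ) (t - δ) (by linarith)
          push_cast at ht1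
          linarith
        have e3 : x + δ + (t - δ) = x + t := by ring
        rw [e1, e2, e3]
  have half : ∀ x t : ℝ, 0 ≤ t → f x = f (x + t) := by
    intro x t ht
    obtain ⟨n, hn'⟩ := exists_nat_ge (t / δ)
    exact hn n x t ht ((div_le_iff₀ hδ).1 hn')
  intro a b
  rcases le_total a b with hab | hab
  · have := half a (b - a) (by linarith)
    simpa using this
  · have := half b (a - b) (by linarith)
    rw [this]
    norm_num

/-- A non-constant `f : ℝ → ℝ` satisfying the two functional
equations must be the identity. -/
theorem stmt2 (f : ℝ → ℝ)
    (hnc : ¬ ∀ x y : ℝ, f x = f y)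
    (h1 : ∀ x y z γ : ℝ, z ∈ Set.Icc (0:ℝ) 1 → γ ∈ Set.Ico (0:ℝ) 1 →
      f (γ * (z * x + (1 - z) * y)) = f (γ * (z * f x + (1 - z) * f y)))
    (h2 : ∀ C γ : ℝ, γ ∈ Set.Ico (0:ℝ) 1 → f C = f (C + γ * f 0)) :
    ∀ x : ℝ, f x = x := by
  have key : ∀ δ : ℝ, 0 < δ → (∀ x t : ℝ, 0 ≤ t → t ≤ δ → f x = f (x + t)) → False := by
    intro δ hδ h
    exact hnc (aux_const_of_shift f δ hδ h)
  -- f (γ x) = f (γ f x) for γ ∈ [0, 1)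
  have hB : ∀ x γ : ℝ, γ ∈ Set.Ico (0:ℝ) 1 → f (γ * x) = f (γ * f x) := by
    intro x γ hγ
    have := h1 x 0 1 γ (by norm_num) hγ
    simpa using this
  -- injectivity
  have hinj : ∀ u v : ℝ, f u = f v → u = v := by
    intro u v huv
    by_contra hne
    wlog hlt : u < v generalizing u v
    · exact this v u huv.symm (Ne.symm hne)
        (lt_of_le_of_ne (not_lt.1 hlt) (Ne.symm hne))
    -- f is constant on [u/2, v/2]
    have hconst : ∀ w : ℝ, u/2 ≤ w → w ≤ v/2 → f w = f ((1/2) * u) := by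
      intro w hw1 hw2
      have hvu : (0:ℝ) < v - u := by linarith
      set z := (v - 2*w)/(v - u) with hz
      have hz0 : 0 ≤ z := div_nonneg (by linarith) hvu.le
      have hz1 : z ≤ 1 := by rw [div_le_one hvu]; linarith
      have h := h1 u v z (1/2) ⟨hz0, hz1⟩ (by norm_num)
      have hw : (1/2 : ℝ) * (z * u + (1 - z) * v) = w := by
        rw [hz]
        field_simp [hvu.ne']
        ring
      have hrhs : (1/2 : ℝ) * (z * f u + (1 - z) * f v) = (1/2) * f u := by
        rw [← huv]; ring
      rw [hw, hrhs] at h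
      rw [h]
      exact (hB u (1/2) (by norm_num)).symm
    -- local constancy everywhere, with step (v - u)/8
    apply key ((v - u)/8) (by linarith)
    intro x t ht0 ht1
    set a := 4*x - u/2 with ha
    have hseg : ∀ b : ℝ, u/2 ≤ b → b ≤ v/2 →
        f ((1/2) * ((1/2) * a + (1 - 1/2) * b)) =
        f ((1/2) * ((1/2) * f a + (1 - 1/2) * f ((1/2) * u))) := by
      intro b hb1 hb2
      have h := h1 a b (1/2) (1/2) (by norm_num) (by norm_num)
      rw [hconst b hb1 hb2] at h
      exact h
    have e1 := hseg (u/2) le_rfl (by linarith)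
    have e2 := hseg (u/2 + 4*t) (by linarith) (by linarith)
    have k1 : (1/2 : ℝ) * ((1/2) * a + (1 - 1/2) * (u/2)) = x := by
      rw [ha]; ring
    have k2 : (1/2 : ℝ) * ((1/2) * a + (1 - 1/2) * (u/2 + 4*t)) = x + t := by
      rw [ha]; ring
    rw [k1] at e1
    rw [k2] at e2
    rw [e1, e2]
  -- conclude
  intro x
  have hb := hB x (1/2) (by norm_num)
  have := hinj _ _ hb
  linarith
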